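/- arXiv:2206.08134 — 3 statements merged into one kernel-verified Lean document; each statement's English description precedes it below -/
import Mathlib

section
/- Let μ > 0, μ_c ≥ 0, γ real, α₂ = arctan(γ/2), and define W_{αα}(p, α) = (μ − μ_c)(cos α · p − 2 sin α)² + μ_c(sin α · p + 2 cos α)² − μ(sin α · p − 4 sin²(α/2))(sin α · p + 2 cos α). Then W_{αα}(γ, α₂) = √(γ² + 4)·(2μ + (μ_c − μ)·√(γ² + 4)). -/
open Real

theorem stmt_8 (μ μc γ : ℝ) (hμ : 0 < μ) (hμc : 0 ≤ μc)
    (Waa : ℝ → ℝ → ℝ)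
    (hW : ∀ p α, Waa p α =
      (μ - μc) * (cos α * p - 2 * sin α)^2 + μc * (sin α * p + 2 * cos α)^2
        - μ * (sin α * p - 4 * sin (α/2) ^ 2) * (sin α * p + 2 * cos α)) :
    Waa γ (arctan (γ/2))
      = Real.sqrt (γ^2 + 4) * (2 * μ + (μc - μ) * Real.sqrt (γ^2 + 4)) := by
  set s := Real.sqrt (γ^2 + 4) with hsdef
  have hs0 : 0 < s := Real.sqrt_pos.mpr (by positivity)
  have hs2 : s^2 = γ^2 + 4 := Real.sq_sqrt (by positivity)
  set A := arctan (γ/2) with hA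
  have hroot : Real.sqrt (1 + (γ/2)^2) = s / 2 := by
    rw [show (1 + (γ/2)^2) = (s/2)^2 by field_simp; linarith [hs2]]
    exact Real.sqrt_sq (by positivity)
  have hc : cos A = 2 / s := by
    rw [hA, Real.cos_arctan, hroot]
    field_simp
  have hsin : sin A = γ / s := by
    rw [hA, Real.sin_arctan, hroot]
    field_simp
  have hhalf : sin (A / 2)^2 = 1/2 - cos A / 2 := by
    have h2 : 2 * (A / 2) = A := by ring
    rw [Real.sin_sq_eq_half_sub, h2]
  have e1 : cos A * γ - 2 * sin A = 0 := by rw [hc, hsin]; field_simp; ring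
  have e2 : sin A * γ + 2 * cos A = s := by
    rw [hc, hsin]; field_simp; nlinarith [hs2]
  have e3 : sin A * γ - 4 * sin (A/2)^2 = s - 2 := by
    rw [hhalf, hc, hsin]; field_simp; nlinarith [hs2]
  rw [hW, e1, e2, e3]
  ring
end

section
/- Let 0 < μ_c < μ and γ = 2√(μ_c(2μ − μ_c))/(μ − μ_c), α₂ = arctan(γ/2), and f as above. Then f'(α₂) = 0, f''(α₂) = 0, f'''(α₂) = 0, and f⁽⁴⁾(α₂) = 12μ²/(μ − μ_c) > 0. -/
open Real

noncomputable def Gfun (K A B C D : ℝ) : ℝ → ℝ :=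
  fun x => K + A * Real.cos (2*x) + B * Real.sin (2*x) + C * Real.cos x + D * Real.sin x

lemma hasDerivAt_Gfun (K A B C D x : ℝ) :
    HasDerivAt (Gfun K A B C D) (Gfun 0 (2*B) (-2*A) D (-C) x) x := by
  have h2x : HasDerivAt (fun y : ℝ => 2*y) 2 x := by
    simpa using (hasDerivAt_id x).const_mul 2
  have hc2 : HasDerivAt (fun y : ℝ => Real.cos (2*y)) (-Real.sin (2*x) * 2) x :=
    (Real.hasDerivAt_cos (2*x)).comp x h2x
  have hs2 : HasDerivAt (fun y : ℝ => Real.sin (2*y)) (Real.cos (2*x) * 2) x :=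
    (Real.hasDerivAt_sin (2*x)).comp x h2x
  have h := ((((hasDerivAt_const x K).add (hc2.const_mul A)).add
      (hs2.const_mul B)).add ((Real.hasDerivAt_cos x).const_mul C)).add
      ((Real.hasDerivAt_sin x).const_mul D)
  have e : Gfun 0 (2*B) (-2*A) D (-C) x
      = 0 + A * (-Real.sin (2 * x) * 2) + B * (Real.cos (2 * x) * 2) + C * -Real.sin x + D * Real.cos x := by
    simp [Gfun]; ring
  rw [e]
  exact h

lemma deriv_Gfun (K A B C D : ℝ) :
    deriv (Gfun K A B C D) = Gfun 0 (2*B) (-2*A) D (-C) :=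
  funext fun x => (hasDerivAt_Gfun K A B C D x).deriv

set_option maxHeartbeats 1000000 in
theorem stmt_14 (μ μc : ℝ) (h1 : 0 < μc) (h2 : μc < μ)
    (γ : ℝ) (hγ : γ = 2 * Real.sqrt (μc * (2 * μ - μc)) / (μ - μc))
    (f : ℝ → ℝ)
    (hf : ∀ a, f a = (μ/2) * γ^2 + (μ/2) * (γ * sin a - 4 * sin (a/2) ^ 2)^2
          + (μc/2) * (γ * cos a - 2 * sin a)^2) :
    iteratedDeriv 1 f (arctan (γ/2)) = 0 ∧
    iteratedDeriv 2 f (arctan (γ/2)) = 0 ∧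
    iteratedDeriv 3 f (arctan (γ/2)) = 0 ∧
    iteratedDeriv 4 f (arctan (γ/2)) = 12 * μ^2 / (μ - μc) ∧
    0 < 12 * μ^2 / (μ - μc) := by
  have hm : (0:ℝ) < μ - μc := by linarith
  have hμ : (0:ℝ) < μ := by linarith
  obtain ⟨K, hK⟩ : ∃ K : ℝ, K = 3*μ + μc + (3*μ + μc) * γ^2/4 := ⟨_, rfl⟩
  obtain ⟨A, hA⟩ : ∃ A : ℝ, A = (μ - μc) * (1 - γ^2/4) := ⟨_, rfl⟩
  obtain ⟨B, hB⟩ : ∃ B : ℝ, B = (μ - μc) * γ := ⟨_, rfl⟩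
  obtain ⟨C, hC⟩ : ∃ C : ℝ, C = -4*μ := ⟨_, rfl⟩
  obtain ⟨D, hD⟩ : ∃ D : ℝ, D = -2*μ*γ := ⟨_, rfl⟩
  -- γ² relation
  have hγm : (μ - μc)^2 * γ^2 = 4 * μc * (2*μ - μc) := by
    rw [hγ]
    rw [div_pow, mul_pow, sq_sqrt (by nlinarith : (0:ℝ) ≤ μc * (2*μ - μc))]
    field_simp
    ring
  -- f equals the Fourier form
  have hfG : f = Gfun K A B C D := by
    funext x
    rw [hf x]
    have hhalf : Real.sin (x/2)^2 = 1/2 - Real.cos x / 2 := by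
      have := Real.sin_sq_eq_half_sub (x/2)
      rwa [show 2*(x/2) = x by ring] at this
    simp only [Gfun, Real.cos_two_mul, Real.sin_two_mul, hhalf, hK, hA, hB, hC, hD]
    have hpy := Real.sin_sq_add_cos_sq x
    linear_combination (2*μc + μ*γ^2/2) * hpy
  -- iterated derivatives
  have e1 : iteratedDeriv 1 f = Gfun 0 (2*B) (-2*A) D (-C) := by
    rw [iteratedDeriv_one, hfG, deriv_Gfun]
  have e2 : iteratedDeriv 2 f = Gfun 0 (2*(-2*A)) (-2*(2*B)) (-C) (-D) := by
    rw [iteratedDeriv_succ, e1, deriv_Gfun]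
  have e3 : iteratedDeriv 3 f = Gfun 0 (2*(-2*(2*B))) (-2*(2*(-2*A))) (-D) (-(-C)) := by
    rw [iteratedDeriv_succ, e2, deriv_Gfun]
  have e4 : iteratedDeriv 4 f
      = Gfun 0 (2*(-2*(2*(-2*A)))) (-2*(2*(-2*(2*B)))) (-(-C)) (-(-D)) := by
    rw [iteratedDeriv_succ, e3, deriv_Gfun]
  -- trig values at arctan (γ/2)
  have hμ0 : μ ≠ 0 := ne_of_gt hμ
  have hm0 : μ - μc ≠ 0 := ne_of_gt hm
  have hγ2 : γ^2 = 4*μc*(2*μ - μc)/(μ - μc)^2 := by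
    field_simp
    linear_combination hγm
  have hγ3 : γ^3 = γ * (4*μc*(2*μ - μc)/(μ - μc)^2) := by
    rw [show γ^3 = γ^2 * γ by ring, hγ2]; ring
  have h1t : 1 + (γ/2)^2 = μ^2/(μ - μc)^2 := by
    rw [eq_div_iff (pow_ne_zero 2 hm0)]
    linear_combination hγm/4
  have hsqrt : Real.sqrt (1 + (γ/2)^2) = μ/(μ - μc) := by
    rw [h1t, ← div_pow, Real.sqrt_sq (le_of_lt (div_pos hμ hm))]
  have hc : Real.cos (arctan (γ/2)) = (μ - μc)/μ := by
    rw [Real.cos_arctan, hsqrt, one_div_div]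
  have hs : Real.sin (arctan (γ/2)) = γ*(μ - μc)/(2*μ) := by
    rw [Real.sin_arctan, hsqrt]
    field_simp
  have hc2 : Real.cos (2 * arctan (γ/2)) = 2*((μ - μc)/μ)^2 - 1 := by
    rw [Real.cos_two_mul, hc]
  have hs2 : Real.sin (2 * arctan (γ/2)) = 2*(γ*(μ - μc)/(2*μ))*((μ - μc)/μ) := by
    rw [Real.sin_two_mul, hs, hc]
  refine ⟨?_, ?_, ?_, ?_, div_pos (by positivity) hm⟩
  · rw [e1]; simp only [Gfun, hc2, hs2, hc, hs, hA, hB, hC, hD]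
    ring_nf
    simp only [hγ3, hγ2]
    field_simp
    ring
  · rw [e2]; simp only [Gfun, hc2, hs2, hc, hs, hA, hB, hC, hD]
    ring_nf
    simp only [hγ3, hγ2]
    field_simp
    ring
  · rw [e3]; simp only [Gfun, hc2, hs2, hc, hs, hA, hB, hC, hD]
    ring_nf
    simp only [hγ3, hγ2]
    field_simp
    ring
  · rw [e4]; simp only [Gfun, hc2, hs2, hc, hs, hA, hB, hC, hD]
    ring_nf
    simp only [hγ3, hγ2]
    field_simp
    ring
end

section
/- Let μ > 0, μ_c ≥ 0 with μ ≠ μ_c, and suppose α, u' satisfy u' = 2 tan α (Case 1). If moreover the balance-of-forces relation ((μ_c − μ)(sin α cos α · u' + cos²α − sin²α) + μ cos α)·α' = (2μ + (μ_c − μ)cos²α)·α'/cos²α holds pointwise (with cos α ≠ 0), then μ cos³α·α' = 2μ·α', hence α' = 0. -/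
open Real

theorem stmt_19 (μ μc : ℝ) (hμ : 0 < μ) (hμc : 0 ≤ μc) (hne : μ ≠ μc)
    (a p a' : ℝ) (hcos : cos a ≠ 0) (hp : p = 2 * tan a)
    (hbal : ((μc - μ) * (sin a * cos a * p + cos a ^ 2 - sin a ^ 2) + μ * cos a) * a'
        = (2 * μ + (μc - μ) * cos a ^ 2) * a' / cos a ^ 2) :
    μ * cos a ^ 3 * a' = 2 * μ * a' ∧ a' = 0 := by
  rw [hp, tan_eq_sin_div_cos] at hbal
  have hpy := sin_sq_add_cos_sq a
  have key : μ * cos a ^ 3 * a' = 2 * μ * a' := by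
    field_simp at hbal
    have h6 : (((μc - μ) * (sin a * cos a * (2 * sin a) + cos a ^ 2 * cos a
        - cos a * sin a ^ 2) + μ * cos a * cos a) * a' * cos a) * cos a
        = ((2 * μ + (μc - μ) * cos a ^ 2) * a') * cos a := by
      linear_combination cos a * hbal
    have h7 := mul_right_cancel₀ hcos h6
    linear_combination h7 + (μ - μc) * a' * cos a ^ 2 * hpy
  refine ⟨key, ?_⟩
  have h3 : cos a ^ 3 ≤ 1 := by
    nlinarith [cos_le_one a, neg_one_le_cos a, sq_nonneg (cos a)]
  have h4 : (cos a ^ 3 - 2) * a' = 0 := by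
    have h5 : μ * ((cos a ^ 3 - 2) * a') = 0 := by linarith [key]
    exact (mul_eq_zero.mp h5).resolve_left hμ.ne'
  rcases mul_eq_zero.mp h4 with h | h
  · nlinarith
  · exact h
end
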